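/- Let n ≥ 5. In B̃_n, writing g_b := b^{−1} g b for conjugation, one has (s_1)_{x_i} = s_1 for every generator x_i with i ≠ 2, and (s_1)_{x_2} = s_1 u_2^{−1}. -/

import Mathlib

open scoped commutatorElement

/-- The defining relators of the Artin braid group `B_n` on `n` strands, with
generators `x_1, …, x_{n-1}` indexed by `Fin (n-1)` (index `i` corresponds to `x_{i+1}`). -/
def braidRels (n : ℕ) : Set (FreeGroup (Fin (n - 1))) :=
  {r | (∃ i j : Fin (n - 1), (i : ℕ) + 1 < (j : ℕ) ∧
          r = FreeGroup.of i * FreeGroup.of j * (FreeGroup.of i)⁻¹ * (FreeGroup.of j)⁻¹) ∨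
       (∃ i j : Fin (n - 1), (i : ℕ) + 1 = (j : ℕ) ∧
          r = FreeGroup.of i * FreeGroup.of j * FreeGroup.of i *
              (FreeGroup.of j * FreeGroup.of i * FreeGroup.of j)⁻¹)}

/-- The relators of `B̃_n`: the braid relators together with the commutator
`[x_2, (x_1 x_3) x_2 (x_1 x_3)⁻¹]` (in the `0`-indexed notation: `[x 1, (x 0 * x 2) * x 1 * (x 0 * x 2)⁻¹]`). -/
def tildeRels (n : ℕ) (hn : 5 ≤ n) : Set (FreeGroup (Fin (n - 1))) :=
  insert
    ⁅FreeGroup.of (⟨1, by omega⟩ : Fin (n - 1)),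
      (FreeGroup.of (⟨0, by omega⟩ : Fin (n - 1)) * FreeGroup.of (⟨2, by omega⟩ : Fin (n - 1))) *
        FreeGroup.of (⟨1, by omega⟩ : Fin (n - 1)) *
        ((FreeGroup.of (⟨0, by omega⟩ : Fin (n - 1)) *
          FreeGroup.of (⟨2, by omega⟩ : Fin (n - 1))))⁻¹⁆
    (braidRels n)

/-- The group `B̃_n`. -/
abbrev Btilde (n : ℕ) (hn : 5 ≤ n) : Type := PresentedGroup (tildeRels n hn)

/-- The image `x_i` of the `i`-th generator in `B̃_n` (here `i : Fin (n-1)` corresponds to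
the generator `x_{i+1}` of the paper). -/
def xg (n : ℕ) (hn : 5 ≤ n) (i : Fin (n - 1)) : Btilde n hn := PresentedGroup.of i

/-- `s_1 = x_1²`. -/
def s1 (n : ℕ) (hn : 5 ≤ n) : Btilde n hn := xg n hn ⟨0, by omega⟩ ^ 2

/-- `μ = [x_1², x_2²]`. -/
def mu (n : ℕ) (hn : 5 ≤ n) : Btilde n hn :=
  ⁅xg n hn ⟨0, by omega⟩ ^ 2, xg n hn ⟨1, by omega⟩ ^ 2⁆

/-- `u_i = [x_i⁻¹, x_{i+1}²]` for `1 ≤ i ≤ n-2`, and `u_{n-1} = [x_{n-2}², x_{n-1}]`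
(in `0`-indexed notation: `uu i = ⁅(x i)⁻¹, (x (i+1))²⁆` for `i + 1 < n - 1`, and
`uu ⟨n-2,_⟩ = ⁅(x ⟨n-3,_⟩)², x ⟨n-2,_⟩⁆`). -/
def uu (n : ℕ) (hn : 5 ≤ n) (i : Fin (n - 1)) : Btilde n hn :=
  if h : (i : ℕ) + 1 < n - 1 then
    ⁅(xg n hn i)⁻¹, xg n hn ⟨(i : ℕ) + 1, h⟩ ^ 2⁆
  else
    ⁅xg n hn ⟨(i : ℕ) - 1, by have := i.isLt; omega⟩ ^ 2, xg n hn i⁆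


-- auxiliary lemmas
lemma mk_rel_one {α : Type*} {rels : Set (FreeGroup α)} {r : FreeGroup α} (hr : r ∈ rels) :
    PresentedGroup.mk rels r = 1 :=
  (QuotientGroup.eq_one_iff r).mpr (Subgroup.subset_normalClosure hr)

lemma of_comm {α : Type*} {rels : Set (FreeGroup α)} {i j : α}
    (hr : FreeGroup.of i * FreeGroup.of j * (FreeGroup.of i)⁻¹ * (FreeGroup.of j)⁻¹ ∈ rels) :
    (PresentedGroup.of i : PresentedGroup rels) * PresentedGroup.of j =
      PresentedGroup.of j * PresentedGroup.of i := by
  have h1 := mk_rel_one hr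
  simp only [map_mul, map_inv] at h1
  calc (PresentedGroup.of i : PresentedGroup rels) * PresentedGroup.of j
      = (PresentedGroup.mk rels (FreeGroup.of i) * PresentedGroup.mk rels (FreeGroup.of j) *
          (PresentedGroup.mk rels (FreeGroup.of i))⁻¹ *
          (PresentedGroup.mk rels (FreeGroup.of j))⁻¹) *
        (PresentedGroup.mk rels (FreeGroup.of j) * PresentedGroup.mk rels (FreeGroup.of i)) := by
        show PresentedGroup.mk rels (FreeGroup.of i) * PresentedGroup.mk rels (FreeGroup.of j) = _
        group
    _ = 1 * (PresentedGroup.mk rels (FreeGroup.of j) * PresentedGroup.mk rels (FreeGroup.of i)) := by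
        rw [h1]
    _ = _ := by rw [one_mul]; rfl

lemma of_braid {α : Type*} {rels : Set (FreeGroup α)} {i j : α}
    (hr : FreeGroup.of i * FreeGroup.of j * FreeGroup.of i *
        (FreeGroup.of j * FreeGroup.of i * FreeGroup.of j)⁻¹ ∈ rels) :
    (PresentedGroup.of i : PresentedGroup rels) * PresentedGroup.of j * PresentedGroup.of i =
      PresentedGroup.of j * PresentedGroup.of i * PresentedGroup.of j := by
  have h1 := mk_rel_one hr
  simp only [map_mul, map_inv] at h1
  calc (PresentedGroup.of i : PresentedGroup rels) * PresentedGroup.of j * PresentedGroup.of i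
      = (PresentedGroup.mk rels (FreeGroup.of i) * PresentedGroup.mk rels (FreeGroup.of j) *
          PresentedGroup.mk rels (FreeGroup.of i) *
          (PresentedGroup.mk rels (FreeGroup.of j) * PresentedGroup.mk rels (FreeGroup.of i) *
            PresentedGroup.mk rels (FreeGroup.of j))⁻¹) *
        (PresentedGroup.mk rels (FreeGroup.of j) * PresentedGroup.mk rels (FreeGroup.of i) *
          PresentedGroup.mk rels (FreeGroup.of j)) := by
        show PresentedGroup.mk rels (FreeGroup.of i) * PresentedGroup.mk rels (FreeGroup.of j) *
          PresentedGroup.mk rels (FreeGroup.of i) = _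
        group
    _ = _ := by rw [h1, one_mul]; rfl

lemma key {G : Type*} [Group G] (a b c : G)
    (h1 : a * c = c * a)
    (h2 : a * b * a = b * a * b)
    (h3 : b * c * b = c * b * c)
    (h4 : b * (a * c * b * (a * c)⁻¹) = a * c * b * (a * c)⁻¹ * b) :
    b⁻¹ * a ^ 2 * b = a ^ 2 * (c ^ 2 * (b⁻¹ * (c ^ 2)⁻¹ * b)) := by
  have e2' : a⁻¹ * b * a = b * a * b⁻¹ := by
    calc a⁻¹ * b * a = a⁻¹ * (b * a * b) * b⁻¹ := by group
      _ = a⁻¹ * (a * b * a) * b⁻¹ := by rw [← h2]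
      _ = _ := by group
  have e2 : a * b * a⁻¹ = b⁻¹ * a * b := by
    calc a * b * a⁻¹ = b⁻¹ * (b * a * b) * a⁻¹ := by group
      _ = b⁻¹ * (a * b * a) * a⁻¹ := by rw [h2]
      _ = _ := by group
  have e3' : c⁻¹ * b * c = b * c * b⁻¹ := by
    calc c⁻¹ * b * c = c⁻¹ * (b * c * b) * b⁻¹ := by group
      _ = c⁻¹ * (c * b * c) * b⁻¹ := by rw [h3]
      _ = _ := by group
  have e3inv : c⁻¹ * b⁻¹ * c = b * c⁻¹ * b⁻¹ := by
    calc c⁻¹ * b⁻¹ * c = c⁻¹ * b⁻¹ * c⁻¹⁻¹ := by group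
      _ = (c⁻¹ * b * c)⁻¹ := by group
      _ = (b * c * b⁻¹)⁻¹ := by rw [e3']
      _ = _ := by group
  have hca : c⁻¹ * a * c = a := by
    calc c⁻¹ * a * c = c⁻¹ * (a * c) := by group
      _ = c⁻¹ * (c * a) := by rw [h1]
      _ = a := by group
  have hd_eq : a * c * b * (a * c)⁻¹ = c * (b⁻¹ * a * b) * c⁻¹ := by
    calc a * c * b * (a * c)⁻¹ = (a * c) * b * c⁻¹ * a⁻¹ := by group
      _ = (c * a) * b * c⁻¹ * a⁻¹ := by rw [h1]
      _ = c * (a * b * a⁻¹) * (a * c⁻¹ * a⁻¹) := by group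
      _ = c * (b⁻¹ * a * b) * (a * c⁻¹ * a⁻¹) := by rw [e2]
      _ = c * (b⁻¹ * a * b) * c⁻¹ * (c * a * c⁻¹ * a⁻¹) := by group
      _ = c * (b⁻¹ * a * b) * c⁻¹ * (a * c * c⁻¹ * a⁻¹) := by
          rw [show c * a = a * c from h1.symm]
      _ = _ := by group
  have E : (a * c)⁻¹ * b * (a * c) = b * (c * (b⁻¹ * a * b) * c⁻¹) * b⁻¹ := by
    calc (a * c)⁻¹ * b * (a * c) = c⁻¹ * (a⁻¹ * b * a) * c := by group
      _ = c⁻¹ * (b * a * b⁻¹) * c := by rw [e2']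
      _ = (c⁻¹ * b * c) * (c⁻¹ * a * c) * (c⁻¹ * b⁻¹ * c) := by group
      _ = (b * c * b⁻¹) * a * (b * c⁻¹ * b⁻¹) := by rw [e3', hca, e3inv]
      _ = _ := by group
  have h4' : b * (c * (b⁻¹ * a * b) * c⁻¹) = (c * (b⁻¹ * a * b) * c⁻¹) * b := by
    rw [← hd_eq]; exact h4
  have E2 : (a * c)⁻¹ * b * (a * c) = a * c * b * (a * c)⁻¹ := by
    rw [E, hd_eq]
    calc b * (c * (b⁻¹ * a * b) * c⁻¹) * b⁻¹
        = ((c * (b⁻¹ * a * b) * c⁻¹) * b) * b⁻¹ := by rw [h4']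
      _ = _ := by group
  have hcom : b * (a * c * (a * c)) = a * c * (a * c) * b := by
    calc b * (a * c * (a * c)) = (a * c) * ((a * c)⁻¹ * b * (a * c)) * (a * c) := by group
      _ = (a * c) * (a * c * b * (a * c)⁻¹) * (a * c) := by rw [E2]
      _ = _ := by group
  have hcom2 : b * (a * a * (c * c)) = a * a * (c * c) * b := by
    have hac : a * c * (a * c) = a * a * (c * c) := by
      calc a * c * (a * c) = a * (c * a) * c := by group
        _ = a * (a * c) * c := by rw [← h1]
        _ = _ := by group
    rw [← hac]; exact hcom
  have hinv : b⁻¹ * (a * a * (c * c)) = a * a * (c * c) * b⁻¹ := by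
    calc b⁻¹ * (a * a * (c * c)) = b⁻¹ * (a * a * (c * c) * b) * b⁻¹ := by group
      _ = b⁻¹ * (b * (a * a * (c * c))) * b⁻¹ := by rw [← hcom2]
      _ = _ := by group
  simp only [pow_two]
  calc b⁻¹ * (a * a) * b = (b⁻¹ * (a * a * (c * c))) * (c⁻¹ * c⁻¹ * b) := by group
    _ = (a * a * (c * c) * b⁻¹) * (c⁻¹ * c⁻¹ * b) := by rw [hinv]
    _ = _ := by group

set_option maxHeartbeats 1000000 in
/-- For `n ≥ 5`, in `B̃_n` (with `g_b := b⁻¹ g b`):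
`(s_1)_{x_i} = s_1` for `i ≠ 2` and `(s_1)_{x_2} = s_1 u_2⁻¹`
(in `0`-indexed notation, `x_2` is `xg ⟨1,_⟩` and `u_2` is `uu ⟨1,_⟩`). -/
theorem stmt9 (n : ℕ) (hn : 5 ≤ n) (i : Fin (n - 1)) :
    ((i : ℕ) ≠ 1 → (xg n hn i)⁻¹ * s1 n hn * xg n hn i = s1 n hn) ∧
    ((i : ℕ) = 1 →
      (xg n hn i)⁻¹ * s1 n hn * xg n hn i = s1 n hn * (uu n hn ⟨1, by omega⟩)⁻¹) := by
  have hbraid : braidRels n ⊆ tildeRels n hn := Set.subset_insert _ _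
  set x0 : Fin (n - 1) := ⟨0, by omega⟩ with hx0
  set x1 : Fin (n - 1) := ⟨1, by omega⟩ with hx1
  set x2 : Fin (n - 1) := ⟨2, by omega⟩ with hx2
  constructor
  · intro hne
    rcases Nat.eq_zero_or_pos (i : ℕ) with h0 | hpos
    · have : i = x0 := Fin.ext h0
      subst this
      show (xg n hn x0)⁻¹ * (xg n hn x0 ^ 2) * xg n hn x0 = xg n hn x0 ^ 2
      group
    · have h2le : 2 ≤ (i : ℕ) := by omega
      have hc : xg n hn x0 * xg n hn i = xg n hn i * xg n hn x0 :=
        of_comm (hbraid (Or.inl ⟨x0, i, by rw [hx0]; exact h2le, rfl⟩))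
      show (xg n hn i)⁻¹ * (xg n hn x0 ^ 2) * xg n hn i = xg n hn x0 ^ 2
      simp only [pow_two]
      calc (xg n hn i)⁻¹ * (xg n hn x0 * xg n hn x0) * xg n hn i
          = (xg n hn i)⁻¹ * xg n hn x0 * (xg n hn x0 * xg n hn i) := by group
        _ = (xg n hn i)⁻¹ * xg n hn x0 * (xg n hn i * xg n hn x0) := by rw [hc]
        _ = (xg n hn i)⁻¹ * (xg n hn x0 * xg n hn i) * xg n hn x0 := by group
        _ = (xg n hn i)⁻¹ * (xg n hn i * xg n hn x0) * xg n hn x0 := by rw [hc]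
        _ = _ := by group
  · intro h1v
    have hi : i = x1 := Fin.ext h1v
    subst hi
    have h1 : xg n hn x0 * xg n hn x2 = xg n hn x2 * xg n hn x0 :=
      of_comm (hbraid (Or.inl ⟨x0, x2, by norm_num [hx0, hx2], rfl⟩))
    have h2 : xg n hn x0 * xg n hn x1 * xg n hn x0 = xg n hn x1 * xg n hn x0 * xg n hn x1 :=
      of_braid (hbraid (Or.inr ⟨x0, x1, by norm_num [hx0, hx1], rfl⟩))
    have h3 : xg n hn x1 * xg n hn x2 * xg n hn x1 = xg n hn x2 * xg n hn x1 * xg n hn x2 :=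
      of_braid (hbraid (Or.inr ⟨x1, x2, by norm_num [hx1, hx2], rfl⟩))
    have h4 : xg n hn x1 * (xg n hn x0 * xg n hn x2 * xg n hn x1 * (xg n hn x0 * xg n hn x2)⁻¹) =
        xg n hn x0 * xg n hn x2 * xg n hn x1 * (xg n hn x0 * xg n hn x2)⁻¹ * xg n hn x1 := by
      have hm : ⁅FreeGroup.of x1,
          (FreeGroup.of x0 * FreeGroup.of x2) * FreeGroup.of x1 *
            (FreeGroup.of x0 * FreeGroup.of x2)⁻¹⁆ ∈ tildeRels n hn :=
        Set.mem_insert _ _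
      have hone := mk_rel_one hm
      rw [map_commutatorElement] at hone
      have := commutatorElement_eq_one_iff_mul_comm.mp hone
      simp only [map_mul, map_inv] at this
      exact this
    have huu : uu n hn ⟨1, by omega⟩ = ⁅(xg n hn x1)⁻¹, xg n hn x2 ^ 2⁆ := by
      have hlt : ((⟨1, by omega⟩ : Fin (n - 1)) : ℕ) + 1 < n - 1 := by simp; omega
      rw [uu, dif_pos hlt]
    rw [huu]
    show (xg n hn x1)⁻¹ * xg n hn x0 ^ 2 * xg n hn x1 =
      xg n hn x0 ^ 2 * (⁅(xg n hn x1)⁻¹, xg n hn x2 ^ 2⁆)⁻¹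
    rw [key (xg n hn x0) (xg n hn x1) (xg n hn x2) h1 h2 h3 h4, commutatorElement_def]
    group
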